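/- Define V(x,S) as the dynamic programming value function: V(x,∅) = x and V(x,S) = max{max_{j∈S}(−c_j + E[V(max(x,X_j), S∖{j})]), x, max_{j∈S} E[X_j]} for independent random variables X_j with values in [0,B]. Suppose for each j ∈ S the estimates satisfy |E[φ(X̃_j)] − E[φ(X_j)]| ≤ ε for φ in the class of 1-Lipschitz nondecreasing functions, and |E[X̃_j] − E[X_j]| ≤ ε. Then the estimated value function Ṽ built with X̃_j in place of X_j satisfies |Ṽ(x,S) − V(x,S)| ≤ |S|·ε for all x ∈ [0,B]. -/

import Mathlib

open MeasureTheory ProbabilityTheory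

noncomputable def valueFn {Ω : Type} [MeasurableSpace Ω] (P : Measure Ω) {N : ℕ}
    (c : Fin N → ℝ) (X : Fin N → Ω → ℝ) (x : ℝ) (S : Finset (Fin N)) : ℝ :=
  if h : S.Nonempty then
    max
      (S.attach.sup' (Finset.attach_nonempty_iff.mpr h)
        (fun j => -c j.1 + ∫ ω, valueFn P c X (max x (X j.1 ω)) (S.erase j.1) ∂P))
      (max x (S.sup' h (fun j => ∫ ω, X j ω ∂P)))
  else x
termination_by S.card
decreasing_by exact Finset.card_erase_lt_of_mem j.2

lemma sup'_abs_sub {α : Type*} (s : Finset α) (hs : s.Nonempty) (f g : α → ℝ) {ε : ℝ}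
    (h : ∀ i ∈ s, |f i - g i| ≤ ε) : |s.sup' hs f - s.sup' hs g| ≤ ε := by
  rw [abs_sub_le_iff]
  constructor
  · rw [sub_le_iff_le_add]
    exact Finset.sup'_le _ _ fun i hi => by
      have := (abs_sub_le_iff.mp (h i hi)).1
      have := Finset.le_sup' g hi
      linarith
  · rw [sub_le_iff_le_add]
    exact Finset.sup'_le _ _ fun i hi => by
      have := (abs_sub_le_iff.mp (h i hi)).2
      have := Finset.le_sup' f hi
      linarith

section aux
variable {Ω : Type} [MeasurableSpace Ω] (P : Measure Ω) [IsProbabilityMeasure P] {N : ℕ}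
  (c : Fin N → ℝ) (Y : Fin N → Ω → ℝ) {B : ℝ}

lemma valueFn_bound (hc : ∀ j, 0 ≤ c j) (hB : 0 ≤ B)
    (hr : ∀ j ω, Y j ω ∈ Set.Icc (0 : ℝ) B) (S : Finset (Fin N)) :
    ∀ x : ℝ, x ≤ valueFn P c Y x S ∧ valueFn P c Y x S ≤ max x B := by
  induction S using Finset.strongInduction with
  | _ S IH =>
    intro x
    rw [valueFn]
    by_cases h : S.Nonempty
    · rw [dif_pos h]
      refine ⟨le_max_of_le_right (le_max_left _ _), ?_⟩
      apply max_le
      · apply Finset.sup'_le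
        intro j _
        have hsub := Finset.erase_ssubset j.2
        have hbd : ∀ ω, ‖valueFn P c Y (max x (Y j.1 ω)) (S.erase j.1)‖ ≤ max x B := by
          intro ω
          obtain ⟨h1, h2⟩ := IH _ hsub (max x (Y j.1 ω))
          rw [Real.norm_eq_abs, abs_le]
          constructor
          · have : (0:ℝ) ≤ max x (Y j.1 ω) := le_max_of_le_right (hr j.1 ω).1
            nlinarith [le_max_right x B, hB]
          · refine h2.trans (max_le (max_le (le_max_left _ _) ?_) (le_max_right _ _))
            exact le_max_of_le_right (hr j.1 ω).2
        have := norm_integral_le_of_norm_le_const (μ := P)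
          (f := fun ω => valueFn P c Y (max x (Y j.1 ω)) (S.erase j.1))
          (C := max x B) (Filter.Eventually.of_forall hbd)
        simp only [Measure.real, measure_univ, ENNReal.toReal_one, mul_one] at this
        have h3 : (∫ ω, valueFn P c Y (max x (Y j.1 ω)) (S.erase j.1) ∂P) ≤ max x B :=
          (le_abs_self _).trans this
        have := hc j.1
        linarith
      · apply max_le (le_max_left x B)
        apply le_trans ?_ (le_max_right x B)
        apply Finset.sup'_le
        intro j _
        have hbd : ∀ ω, ‖Y j ω‖ ≤ B := fun ω => by
          rw [Real.norm_eq_abs, abs_le]; exact ⟨by linarith [(hr j ω).1], (hr j ω).2⟩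
        have := norm_integral_le_of_norm_le_const (μ := P) (f := fun ω => Y j ω)
          (C := B) (Filter.Eventually.of_forall hbd)
        simp only [Measure.real, measure_univ, ENNReal.toReal_one, mul_one] at this
        exact (le_abs_self _).trans this
    · rw [dif_neg h]
      exact ⟨le_refl x, le_max_left x B⟩

lemma valueFn_lip (hc : ∀ j, 0 ≤ c j) (hB : 0 ≤ B)
    (hr : ∀ j ω, Y j ω ∈ Set.Icc (0 : ℝ) B) (hm : ∀ j, Measurable (Y j))
    (S : Finset (Fin N)) :
    ∀ x y : ℝ, |valueFn P c Y x S - valueFn P c Y y S| ≤ |x - y| := by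
  induction S using Finset.strongInduction with
  | _ S IH =>
    intro x y
    rw [valueFn, valueFn]
    by_cases h : S.Nonempty
    · rw [dif_pos h, dif_pos h]
      refine (abs_max_sub_max_le_max _ _ _ _).trans (max_le ?_ ?_)
      · apply sup'_abs_sub
        intro j _
        have hsub := Finset.erase_ssubset j.2
        have lip : LipschitzWith 1 (fun z => valueFn P c Y z (S.erase j.1)) := by
          apply LipschitzWith.of_dist_le_mul
          intro a b
          rw [Real.dist_eq, Real.dist_eq, NNReal.coe_one, one_mul]
          exact IH _ hsub a b
        have hint : ∀ z : ℝ,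
            Integrable (fun ω => valueFn P c Y (max z (Y j.1 ω)) (S.erase j.1)) P := by
          intro z
          refine Integrable.mono' (integrable_const (max z B)) ?_
            (Filter.Eventually.of_forall fun ω => ?_)
          · exact (lip.continuous.measurable.comp
              (measurable_const.max (hm j.1))).aestronglyMeasurable
          · obtain ⟨h1, h2⟩ := valueFn_bound P c Y hc hB hr (S.erase j.1) (max z (Y j.1 ω))
            rw [Real.norm_eq_abs, abs_le]
            constructor
            · have : (0:ℝ) ≤ max z (Y j.1 ω) := le_max_of_le_right (hr j.1 ω).1
              nlinarith [le_max_right z B, hB]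
            · refine h2.trans (max_le (max_le (le_max_left _ _) ?_) (le_max_right _ _))
              exact le_max_of_le_right (hr j.1 ω).2
        rw [add_sub_add_left_eq_sub, ← integral_sub (hint x) (hint y)]
        have hbd : ∀ ω, ‖valueFn P c Y (max x (Y j.1 ω)) (S.erase j.1) -
            valueFn P c Y (max y (Y j.1 ω)) (S.erase j.1)‖ ≤ |x - y| := by
          intro ω
          rw [Real.norm_eq_abs]
          refine (IH _ hsub _ _).trans ?_
          refine (abs_max_sub_max_le_max _ _ _ _).trans ?_
          simp
        have := norm_integral_le_of_norm_le_const (μ := P) (C := |x - y|)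
          (Filter.Eventually.of_forall hbd)
        simpa [measure_univ] using this
      · refine (abs_max_sub_max_le_max _ _ _ _).trans ?_
        simp
    · rw [dif_neg h, dif_neg h]


lemma valueFn_integ (hc : ∀ j, 0 ≤ c j) (hB : 0 ≤ B)
    (hr : ∀ j ω, Y j ω ∈ Set.Icc (0 : ℝ) B) (hm : ∀ j, Measurable (Y j))
    (S : Finset (Fin N)) (x : ℝ) (Z : Ω → ℝ) (hZ : Measurable Z)
    (hZr : ∀ ω, Z ω ∈ Set.Icc (0 : ℝ) B) :
    Integrable (fun ω => valueFn P c Y (max x (Z ω)) S) P := by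
  have lip : LipschitzWith 1 (fun z => valueFn P c Y z S) := by
    apply LipschitzWith.of_dist_le_mul
    intro a b
    rw [Real.dist_eq, Real.dist_eq, NNReal.coe_one, one_mul]
    exact valueFn_lip P c Y hc hB hr hm S a b
  refine Integrable.mono' (integrable_const (max x B)) ?_
    (Filter.Eventually.of_forall fun ω => ?_)
  · exact (lip.continuous.measurable.comp
      (measurable_const.max hZ)).aestronglyMeasurable
  · obtain ⟨h1, h2⟩ := valueFn_bound P c Y hc hB hr S (max x (Z ω))
    rw [Real.norm_eq_abs, abs_le]
    constructor
    · have : (0:ℝ) ≤ max x (Z ω) := le_max_of_le_right (hZr ω).1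
      nlinarith [le_max_right x B, hB]
    · refine h2.trans (max_le (max_le (le_max_left _ _) ?_) (le_max_right _ _))
      exact le_max_of_le_right (hZr ω).2

lemma valueFn_mono (hc : ∀ j, 0 ≤ c j) (hB : 0 ≤ B)
    (hr : ∀ j ω, Y j ω ∈ Set.Icc (0 : ℝ) B) (hm : ∀ j, Measurable (Y j))
    (S : Finset (Fin N)) : Monotone (fun x => valueFn P c Y x S) := by
  induction S using Finset.strongInduction with
  | _ S IH =>
    intro x y hxy
    simp only
    rw [valueFn, valueFn]
    by_cases h : S.Nonempty
    · rw [dif_pos h, dif_pos h]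
      apply max_le_max
      · apply Finset.sup'_le
        intro j hj
        refine le_trans ?_ (Finset.le_sup' _ hj)
        apply add_le_add le_rfl
        apply integral_mono
          (valueFn_integ P c Y hc hB hr hm _ x _ (hm j.1) (hr j.1))
          (valueFn_integ P c Y hc hB hr hm _ y _ (hm j.1) (hr j.1))
        intro ω
        exact IH _ (Finset.erase_ssubset j.2) (max_le_max hxy le_rfl)
      · exact max_le_max hxy le_rfl
    · rw [dif_neg h, dif_neg h]; exact hxy

end aux

theorem stmt_16 {Ω : Type} [MeasurableSpace Ω] (P : Measure Ω) [IsProbabilityMeasure P]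
    {N : ℕ} (c : Fin N → ℝ) (hc : ∀ j, 0 ≤ c j)
    (X Xe : Fin N → Ω → ℝ)
    (hmeas : ∀ j, Measurable (X j)) (hmeas' : ∀ j, Measurable (Xe j))
    (hindep : iIndepFun X P)
    (B : ℝ) (hB : 0 ≤ B)
    (hrange : ∀ j ω, X j ω ∈ Set.Icc (0 : ℝ) B)
    (hrange' : ∀ j ω, Xe j ω ∈ Set.Icc (0 : ℝ) B)
    (ε : ℝ) (hε : 0 ≤ ε) (S : Finset (Fin N))
    (hφ : ∀ j ∈ S, ∀ φ : ℝ → ℝ, Monotone φ → LipschitzWith 1 φ →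
      |(∫ ω, φ (Xe j ω) ∂P) - (∫ ω, φ (X j ω) ∂P)| ≤ ε)
    (hmean : ∀ j ∈ S, |(∫ ω, Xe j ω ∂P) - (∫ ω, X j ω ∂P)| ≤ ε) :
    ∀ x ∈ Set.Icc (0 : ℝ) B,
      |valueFn P c Xe x S - valueFn P c X x S| ≤ (S.card : ℝ) * ε := by
  induction S using Finset.strongInduction with
  | _ S IH =>
    intro x hx
    rw [valueFn, valueFn]
    by_cases h : S.Nonempty
    · rw [dif_pos h, dif_pos h]
      have hcard1 : 1 ≤ S.card := Finset.card_pos.mpr h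
      have hcard : (1:ℝ) ≤ (S.card : ℝ) := by exact_mod_cast hcard1
      refine (abs_max_sub_max_le_max _ _ _ _).trans (max_le ?_ ?_)
      · -- sup' part
        apply sup'_abs_sub
        intro j _
        rw [add_sub_add_left_eq_sub]
        have hsub := Finset.erase_ssubset j.2
        have hcerase : ((S.erase j.1).card : ℝ) = (S.card : ℝ) - 1 := by
          rw [Finset.card_erase_of_mem j.2, Nat.cast_sub hcard1, Nat.cast_one]
        set S' := S.erase j.1
        have hInt1 : Integrable (fun ω => valueFn P c Xe (max x (Xe j.1 ω)) S') P :=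
          valueFn_integ P c Xe hc hB hrange' hmeas' S' x _ (hmeas' j.1) (hrange' j.1)
        have hInt2 : Integrable (fun ω => valueFn P c X (max x (Xe j.1 ω)) S') P :=
          valueFn_integ P c X hc hB hrange hmeas S' x _ (hmeas' j.1) (hrange' j.1)
        have step1 : |(∫ ω, valueFn P c Xe (max x (Xe j.1 ω)) S' ∂P) -
            (∫ ω, valueFn P c X (max x (Xe j.1 ω)) S' ∂P)| ≤ ((S.card : ℝ) - 1) * ε := by
          rw [← integral_sub hInt1 hInt2]
          have hbd : ∀ ω, ‖valueFn P c Xe (max x (Xe j.1 ω)) S' -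
              valueFn P c X (max x (Xe j.1 ω)) S'‖ ≤ ((S.card : ℝ) - 1) * ε := by
            intro ω
            rw [Real.norm_eq_abs, ← hcerase]
            refine IH S' hsub (fun i hi => hφ i (Finset.mem_of_mem_erase hi))
              (fun i hi => hmean i (Finset.mem_of_mem_erase hi)) (max x (Xe j.1 ω)) ?_
            exact ⟨le_max_of_le_left hx.1, max_le hx.2 (hrange' j.1 ω).2⟩
          have := norm_integral_le_of_norm_le_const (μ := P) (C := ((S.card : ℝ) - 1) * ε)
            (Filter.Eventually.of_forall hbd)
          simpa [measure_univ] using this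
        have step2 : |(∫ ω, valueFn P c X (max x (Xe j.1 ω)) S' ∂P) -
            (∫ ω, valueFn P c X (max x (X j.1 ω)) S' ∂P)| ≤ ε := by
          have hmono : Monotone (fun y => valueFn P c X (max x y) S') :=
            (valueFn_mono P c X hc hB hrange hmeas S').comp
              fun a b hab => max_le_max le_rfl hab
          have hlip : LipschitzWith 1 (fun y => valueFn P c X (max x y) S') := by
            have lip : LipschitzWith 1 (fun z => valueFn P c X z S') := by
              apply LipschitzWith.of_dist_le_mul
              intro a b
              rw [Real.dist_eq, Real.dist_eq, NNReal.coe_one, one_mul]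
              exact valueFn_lip P c X hc hB hrange hmeas S' a b
            have lipmax : LipschitzWith 1 (fun y : ℝ => max x y) := by
              apply LipschitzWith.of_dist_le_mul
              intro a b
              rw [Real.dist_eq, Real.dist_eq, NNReal.coe_one, one_mul]
              exact (abs_max_sub_max_le_max _ _ _ _).trans (by simp)
            simpa [Function.comp_def] using lip.comp lipmax
          exact hφ j.1 j.2 (fun y => valueFn P c X (max x y) S') hmono hlip
        calc |(∫ ω, valueFn P c Xe (max x (Xe j.1 ω)) S' ∂P) -
              (∫ ω, valueFn P c X (max x (X j.1 ω)) S' ∂P)|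
            ≤ |(∫ ω, valueFn P c Xe (max x (Xe j.1 ω)) S' ∂P) -
              (∫ ω, valueFn P c X (max x (Xe j.1 ω)) S' ∂P)| +
              |(∫ ω, valueFn P c X (max x (Xe j.1 ω)) S' ∂P) -
              (∫ ω, valueFn P c X (max x (X j.1 ω)) S' ∂P)| := abs_sub_le _ _ _
          _ ≤ ((S.card : ℝ) - 1) * ε + ε := add_le_add step1 step2
          _ = (S.card : ℝ) * ε := by ring
      · refine (abs_max_sub_max_le_max _ _ _ _).trans (max_le ?_ ?_)
        · simpa using mul_nonneg (le_trans zero_le_one hcard) hε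
        · refine (sup'_abs_sub S h _ _ hmean).trans ?_
          nlinarith
    · rw [dif_neg h, dif_neg h]
      simp [Finset.not_nonempty_iff_eq_empty.mp h]
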